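/- Let M be an n×m matrix over a commutative ring, A = {1,…,n} indexing rows, and suppose the columns are indexed by a totally ordered set V ⊇ A such that the column indexed by each a ∈ A is the standard basis vector e_a. Let a = (a₁,…,a_k) be a tuple of distinct elements of A and b = (b₁,…,b_k) a tuple of distinct elements of V∖A. Then det((M_{a_i,b_j})_{i,j=1}^k) = sgn(a,b) · det(M restricted to all rows and the columns indexed by V' := {b₁,…,b_k} ∪ (A∖{a₁,…,a_k})), where sgn(a,b) = (−1)^{(number of inversions in the concatenation a⌢(A∖a)) + (number of inversions in b⌢(A∖a))}. -/

import Mathlib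

open scoped Classical

/-- The number of inversions of a list with entries in a linear order: pairs of positions
`i < j` whose entries are out of order. -/
def inversions {V : Type*} [LinearOrder V] (l : List V) : ℕ :=
  (Finset.univ.filter (fun p : Fin l.length × Fin l.length =>
    p.1 < p.2 ∧ l.get p.2 < l.get p.1)).card

namespace SignedMinorAux

open Equiv Finset

lemma inversions_ofFn {V : Type*} [LinearOrder V] {n : ℕ} (f : Fin n → V) :
    inversions (List.ofFn f) =
      (Finset.univ.filter (fun p : Fin n × Fin n => p.1 < p.2 ∧ f p.2 < f p.1)).card := by
  unfold inversions
  have hlen : (List.ofFn f).length = n := List.length_ofFn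
  refine Finset.card_nbij' (fun p => (Fin.cast hlen p.1, Fin.cast hlen p.2))
    (fun p => (Fin.cast hlen.symm p.1, Fin.cast hlen.symm p.2)) ?_ ?_ ?_ ?_
  · intro p hp
    simp only [Finset.coe_filter, Set.mem_setOf_eq, Finset.mem_coe, Finset.mem_filter, Finset.mem_univ, true_and] at hp ⊢
    obtain ⟨h1, h2⟩ := hp
    constructor
    · exact h1
    · rw [List.get_ofFn, List.get_ofFn] at h2
      convert h2 using 2 <;> ext <;> simp
  · intro p hp
    simp only [Finset.coe_filter, Set.mem_setOf_eq, Finset.mem_coe, Finset.mem_filter, Finset.mem_univ, true_and] at hp ⊢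
    obtain ⟨h1, h2⟩ := hp
    constructor
    · exact h1
    · rw [List.get_ofFn, List.get_ofFn]
      convert h2 using 2 <;> ext <;> simp
  · intro p _; simp
  · intro p _; simp

lemma sign_eq_signAux {n : ℕ} (σ : Equiv.Perm (Fin n)) :
    Equiv.Perm.sign σ = Equiv.Perm.signAux σ := by
  have key : ∀ (s : Multiset (Fin n)) (hs : ∀ x, x ∈ s),
      Equiv.Perm.signAux3 σ hs = Equiv.Perm.signAux σ := by
    intro s
    induction s using Quotient.inductionOn with
    | h l =>
      intro hs
      have h2 := Equiv.Perm.signAux_eq_signAux2 l σ (Equiv.refl (Fin n)) (fun x _ => hs x)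
      have h3 : (((Equiv.refl (Fin n)).symm.trans σ).trans (Equiv.refl (Fin n))) = σ := by
        ext x; simp
      rw [h3] at h2
      exact h2.symm
  exact (key Finset.univ.val (fun x => Finset.mem_univ x)).symm ▸ rfl

lemma sign_eq_pow {n : ℕ} (σ : Equiv.Perm (Fin n)) :
    Equiv.Perm.sign σ =
      (-1 : ℤˣ) ^ (Finset.univ.filter
        (fun p : Fin n × Fin n => p.1 < p.2 ∧ σ p.2 < σ p.1)).card := by
  rw [sign_eq_signAux]
  unfold Equiv.Perm.signAux
  rw [Finset.prod_ite]
  simp only [Finset.prod_const, one_pow, mul_one]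
  congr 1
  refine Finset.card_nbij' (fun x => (x.2, x.1)) (fun p => ⟨p.2, p.1⟩) ?_ ?_ ?_ ?_
  · intro x hx
    simp only [Finset.coe_filter, Set.mem_setOf_eq, Finset.mem_coe, Finset.mem_filter, Equiv.Perm.mem_finPairsLT, Finset.mem_univ, true_and] at hx ⊢
    obtain ⟨h1, h2⟩ := hx
    refine ⟨h1, lt_of_le_of_ne h2 ?_⟩
    intro h
    exact absurd (σ.injective h) (ne_of_gt h1)
  · intro p hp
    simp only [Finset.coe_filter, Set.mem_setOf_eq, Finset.mem_coe, Finset.mem_filter, Equiv.Perm.mem_finPairsLT, Finset.mem_univ, true_and] at hp ⊢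
    exact ⟨hp.1, le_of_lt hp.2⟩
  · intro x _; rfl
  · intro p _; rfl

lemma exists_perm {W : Type*} [LinearOrder W] {n : ℕ} (g : Fin n → W)
    (hg : Function.Injective g) (S : Finset W) (hS : S.card = n) (him : ∀ i, g i ∈ S) :
    ∃ σ : Equiv.Perm (Fin n), (∀ i, g i = (S.orderIsoOfFin hS (σ i) : W)) ∧
      Equiv.Perm.sign σ = (-1 : ℤˣ) ^ inversions (List.ofFn g) := by
  have hinj : Function.Injective (fun i => (S.orderIsoOfFin hS).symm ⟨g i, him i⟩) := by
    intro i j h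
    apply hg
    have := congrArg (fun z => ((S.orderIsoOfFin hS) z : W)) h
    simpa using this
  let σ : Equiv.Perm (Fin n) :=
    Equiv.ofBijective _ (Finite.injective_iff_bijective.mp hinj)
  have hσ : ∀ i, g i = (S.orderIsoOfFin hS (σ i) : W) := by
    intro i
    show g i = ((S.orderIsoOfFin hS) ((S.orderIsoOfFin hS).symm ⟨g i, him i⟩) : W)
    simp
  refine ⟨σ, hσ, ?_⟩
  rw [sign_eq_pow, inversions_ofFn]
  congr 2
  apply Finset.filter_congr
  intro p _
  have key : ∀ i j : Fin n, g i < g j ↔ σ i < σ j := by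
    intro i j
    have h1 : g i = S.orderEmbOfFin hS (σ i) := hσ i
    have h2 : g j = S.orderEmbOfFin hS (σ j) := hσ j
    rw [h1, h2, OrderEmbedding.lt_iff_lt]
  constructor
  · rintro ⟨h1, h2⟩; exact ⟨h1, (key _ _).mpr h2⟩
  · rintro ⟨h1, h2⟩; exact ⟨h1, (key _ _).mp h2⟩

lemma ofFn_append_cast {X : Type*} {k r m : ℕ} (u : Fin k → X) (v : Fin r → X)
    (h : m = k + r) :
    List.ofFn (fun i : Fin m => Fin.append u v (Fin.cast h i)) =
      List.ofFn u ++ List.ofFn v := by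
  rw [List.ofFn_congr h]
  simp [Fin.cast_cast]

lemma comp_append {X Y : Type*} {k r : ℕ} (f : X → Y) (u : Fin k → X) (v : Fin r → X)
    (x : Fin (k + r)) : f (Fin.append u v x) = Fin.append (f ∘ u) (f ∘ v) x := by
  induction x using Fin.addCases with
  | left i => simp [Fin.append_left]
  | right i => simp [Fin.append_right]

lemma ofFn_orderEmbOfFin {V : Type*} [LinearOrder V] {r : ℕ} (c : Finset V)
    (hc : c.card = r) :
    List.ofFn (fun j : Fin r => c.orderEmbOfFin hc j) = c.sort (· ≤ ·) := by
  have hl : r = (c.sort (· ≤ ·)).length := by rw [Finset.length_sort, hc]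
  rw [List.ofFn_congr hl]
  have : ∀ i : Fin (c.sort (· ≤ ·)).length,
      c.orderEmbOfFin hc (Fin.cast hl.symm i) = (c.sort (· ≤ ·)).get i := by
    intro i
    rw [Finset.orderEmbOfFin_apply]
    simp [List.get_eq_getElem]
  simp only [this]
  exact List.ofFn_get _

end SignedMinorAux

open SignedMinorAux

theorem signed_minor {V R : Type*} [Fintype V] [LinearOrder V] [CommRing R]
    {m : ℕ} (A : Finset V) (hA : A.card = m)
    (M : Matrix (Fin m) V R)
    (hcol : ∀ i j : Fin m, M j ((A.orderIsoOfFin hA i : V)) = if j = i then 1 else 0)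
    {k : ℕ} (a : Fin k → Fin m) (ha : Function.Injective a)
    (b : Fin k → V) (hb : Function.Injective b) (hbA : ∀ i, b i ∉ A)
    (V' : Finset V)
    (hV'def : V' = Finset.image b Finset.univ ∪
      (A \ Finset.image (fun i => (A.orderIsoOfFin hA (a i) : V)) Finset.univ))
    (hV' : V'.card = m) :
    Matrix.det (Matrix.of fun i j : Fin k => M (a i) (b j)) =
      ((-1 : R) ^
        (inversions ((List.ofFn (fun i => (A.orderIsoOfFin hA (a i) : V))) ++
            Finset.sort
              (A \ Finset.image (fun i => (A.orderIsoOfFin hA (a i) : V)) Finset.univ) (· ≤ ·)) +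
         inversions ((List.ofFn b) ++
            Finset.sort
              (A \ Finset.image (fun i => (A.orderIsoOfFin hA (a i) : V)) Finset.univ) (· ≤ ·)))) *
        Matrix.det (Matrix.of fun i j : Fin m => M i ((V'.orderIsoOfFin hV' j : V))) := by
  classical
  -- notation
  set α' : Fin m → V := fun i => (A.orderIsoOfFin hA i : V) with hα'def
  have hα'mono : StrictMono α' := (A.orderEmbOfFin hA).strictMono
  have hα'inj : Function.Injective α' := hα'mono.injective
  have hα'mem : ∀ i, α' i ∈ A := fun i => (A.orderIsoOfFin hA i).2
  have hkm : k ≤ m := by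
    have := Fintype.card_le_of_injective a ha
    simpa using this
  set r := m - k with hrdef
  have hmk : m = k + r := by omega
  -- row complement
  set Cr : Finset (Fin m) := Finset.univ \ Finset.image a Finset.univ with hCrdef
  have hCr : Cr.card = r := by
    rw [hCrdef, Finset.card_sdiff_of_subset (Finset.subset_univ _),
      Finset.card_image_of_injective _ ha]
    simp [hrdef]
  set cR : Fin r → Fin m := fun j => Cr.orderEmbOfFin hCr j with hcRdef
  have hcRmem : ∀ j, cR j ∉ Finset.image a Finset.univ := by
    intro j hmem
    have h1 : cR j ∈ Cr := Finset.orderEmbOfFin_mem _ _ _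
    rw [hCrdef, Finset.mem_sdiff] at h1
    exact h1.2 hmem
  -- column complement
  set aA : Finset V := Finset.image (fun i => α' (a i)) Finset.univ with haAdef
  set c : Finset V := A \ aA with hcdef
  have haAsub : aA ⊆ A := by
    intro x hx
    rw [haAdef, Finset.mem_image] at hx
    obtain ⟨i, _, rfl⟩ := hx
    exact hα'mem _
  have hc : c.card = r := by
    rw [hcdef, Finset.card_sdiff_of_subset haAsub, hA, haAdef,
      Finset.card_image_of_injective _
        (show Function.Injective (fun i => α' (a i)) from fun x y h => ha (hα'inj h))]
    simp [hrdef]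
  set cs : Fin r → V := fun j => c.orderEmbOfFin hc j with hcsdef
  -- key compatibility of the two complements
  have hkey : ∀ j, α' (cR j) = cs j := by
    have heq : (fun j => α' (cR j)) = ⇑(c.orderEmbOfFin hc) := by
      apply Finset.orderEmbOfFin_unique
      · intro j
        rw [hcdef, Finset.mem_sdiff]
        refine ⟨hα'mem _, ?_⟩
        intro hmem
        rw [haAdef, Finset.mem_image] at hmem
        obtain ⟨i, _, hi⟩ := hmem
        exact hcRmem j (by
          rw [← hα'inj hi]
          exact Finset.mem_image_of_mem a (Finset.mem_univ i))
      · exact hα'mono.comp (Cr.orderEmbOfFin hCr).strictMono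
    intro j
    exact congrFun heq j
  -- the two "big" tuples
  set grow : Fin m → Fin m := fun i => Fin.append a cR (Fin.cast hmk i) with hgrowdef
  set gcol : Fin m → V := fun i => Fin.append b cs (Fin.cast hmk i) with hgcoldef
  -- surjectivity / bijectivity of grow
  have hgrow_surj : Function.Surjective grow := by
    intro q
    by_cases hq : q ∈ Finset.image a Finset.univ
    · rw [Finset.mem_image] at hq
      obtain ⟨i, _, rfl⟩ := hq
      exact ⟨Fin.cast hmk.symm (Fin.castAdd r i), by
        simp [hgrowdef, Fin.cast_cast, Fin.append_left]⟩
    · have hq' : q ∈ Cr := by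
        rw [hCrdef, Finset.mem_sdiff]; exact ⟨Finset.mem_univ q, hq⟩
      have : q ∈ Set.range (Cr.orderEmbOfFin hCr) := by
        rw [Finset.range_orderEmbOfFin]; exact_mod_cast hq'
      obtain ⟨j, hj⟩ := this
      exact ⟨Fin.cast hmk.symm (Fin.natAdd k j), by
        simp [hgrowdef, Fin.cast_cast, Fin.append_right, hcRdef, hj]⟩
  have hgrow_bij : Function.Bijective grow :=
    Finite.surjective_iff_bijective.mp hgrow_surj
  set ρ : Equiv.Perm (Fin m) := Equiv.ofBijective grow hgrow_bij with hρdef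
  -- injectivity of gcol and membership in V'
  have hcsmem : ∀ j, cs j ∈ c := fun j => Finset.orderEmbOfFin_mem _ _ _
  have hcsA : ∀ j, cs j ∈ A := by
    intro j; have := hcsmem j; rw [hcdef, Finset.mem_sdiff] at this; exact this.1
  have happ_inj : Function.Injective (Fin.append b cs) := by
    intro x y hxy
    induction x using Fin.addCases with
    | left i =>
      induction y using Fin.addCases with
      | left i' =>
        rw [Fin.append_left, Fin.append_left] at hxy
        rw [hb hxy]
      | right j' =>
        rw [Fin.append_left, Fin.append_right] at hxy
        exact absurd (hxy ▸ hcsA j') (hbA i)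
    | right j =>
      induction y using Fin.addCases with
      | left i' =>
        rw [Fin.append_right, Fin.append_left] at hxy
        exact absurd (hxy ▸ hcsA j) (hbA i')
      | right j' =>
        rw [Fin.append_right, Fin.append_right] at hxy
        rw [(c.orderEmbOfFin hc).injective hxy]
  have hgcol_inj : Function.Injective gcol := by
    intro x y hxy
    have := happ_inj hxy
    exact Fin.cast_injective _ this
  have hgcol_mem : ∀ i, gcol i ∈ V' := by
    have hx : ∀ x : Fin (k + r), Fin.append b cs x ∈ V' := by
      intro x
      induction x using Fin.addCases with
      | left j =>
        rw [Fin.append_left, hV'def]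
        exact Finset.mem_union_left _ (Finset.mem_image_of_mem b (Finset.mem_univ j))
      | right j =>
        rw [Fin.append_right, hV'def]
        exact Finset.mem_union_right _ (hcsmem j)
    intro i
    exact hx (Fin.cast hmk i)
  obtain ⟨σc, hσc1, hσc2⟩ := exists_perm gcol hgcol_inj V' hV' hgcol_mem
  -- the auxiliary matrix N
  set M0 : Matrix (Fin m) (Fin m) R :=
    Matrix.of fun i j : Fin m => M i ((V'.orderIsoOfFin hV' j : V)) with hM0def
  set N : Matrix (Fin m) (Fin m) R := Matrix.of fun i j => M (grow i) (gcol j) with hNdef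
  -- determinant of N via permutations
  have hdetN : N.det = (Equiv.Perm.sign σc : ℤ) * ((Equiv.Perm.sign ρ : ℤ) * M0.det) := by
    have hN : N = (M0.submatrix ρ id).submatrix id σc := by
      ext i j
      simp only [hNdef, Matrix.submatrix_apply, Matrix.of_apply, id_eq, hM0def]
      rw [hσc1 j]
      rfl
    rw [hN, Matrix.det_permute' σc, Matrix.det_permute ρ]
  -- determinant of N via block structure
  have hdetN2 : N.det = Matrix.det (Matrix.of fun i j : Fin k => M (a i) (b j)) := by
    set e : Fin k ⊕ Fin r ≃ Fin m := finSumFinEquiv.trans (finCongr hmk.symm) with hedef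
    have hsub : N.submatrix e e =
        Matrix.fromBlocks (Matrix.of fun i j : Fin k => M (a i) (b j)) 0
          (Matrix.of fun i j => M (cR i) (b j)) 1 := by
      ext i j
      have hgrowl : ∀ i : Fin k, grow (e (Sum.inl i)) = a i := by
        intro i
        simp [hgrowdef, hedef, finCongr, Fin.cast_cast, Fin.append_left]
      have hgrowr : ∀ i : Fin r, grow (e (Sum.inr i)) = cR i := by
        intro i
        simp [hgrowdef, hedef, finCongr, Fin.cast_cast, Fin.append_right]
      have hgcoll : ∀ j : Fin k, gcol (e (Sum.inl j)) = b j := by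
        intro j
        simp [hgcoldef, hedef, finCongr, Fin.cast_cast, Fin.append_left]
      have hgcolr : ∀ j : Fin r, gcol (e (Sum.inr j)) = cs j := by
        intro j
        simp [hgcoldef, hedef, finCongr, Fin.cast_cast, Fin.append_right]
      cases i with
      | inl i =>
        cases j with
        | inl j =>
          simp [Matrix.submatrix_apply, hNdef, hgrowl, hgcoll]
        | inr j =>
          have : M (a i) (cs j) = 0 := by
            rw [← hkey j, hcol (cR j) (a i)]
            rw [if_neg]
            intro h
            exact hcRmem j (h ▸ Finset.mem_image_of_mem a (Finset.mem_univ i))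
          simp [Matrix.submatrix_apply, hNdef, hgrowl, hgcolr, this]
      | inr i =>
        cases j with
        | inl j =>
          simp [Matrix.submatrix_apply, hNdef, hgrowr, hgcoll]
        | inr j =>
          have : M (cR i) (cs j) = if i = j then 1 else 0 := by
            rw [← hkey j, hcol (cR j) (cR i)]
            congr 1
            simp only [eq_iff_iff]
            exact ⟨fun h => (Cr.orderEmbOfFin hCr).injective h, fun h => by rw [h]⟩
          simp only [Matrix.submatrix_apply, hNdef, Matrix.of_apply, hgrowr, hgcolr,
            Matrix.fromBlocks_apply₂₂, this]
          rw [Matrix.one_apply]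
    have := Matrix.det_submatrix_equiv_self e N
    rw [← this, hsub, Matrix.det_fromBlocks_zero₁₂]
    simp
  -- identify the signs with inversion counts
  have hrowlist : List.ofFn (fun i => α' (a i)) ++ c.sort (· ≤ ·) =
      List.ofFn (fun i => α' (grow i)) := by
    have h1 : ∀ i : Fin m, α' (grow i) = Fin.append (α' ∘ a) (α' ∘ cR) (Fin.cast hmk i) := by
      intro i
      rw [hgrowdef]
      exact comp_append α' a cR (Fin.cast hmk i)
    simp only [h1]
    rw [ofFn_append_cast (α' ∘ a) (α' ∘ cR) hmk]
    congr 1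
    have : α' ∘ cR = fun j => c.orderEmbOfFin hc j := by
      funext j; exact hkey j
    rw [this, ofFn_orderEmbOfFin]
  have hcollist : List.ofFn b ++ c.sort (· ≤ ·) = List.ofFn gcol := by
    have h1 : List.ofFn gcol = List.ofFn b ++ List.ofFn cs := by
      rw [hgcoldef]
      exact ofFn_append_cast b cs hmk
    rw [h1]
    congr 1
    rw [hcsdef, ofFn_orderEmbOfFin]
  have hsignρ : Equiv.Perm.sign ρ =
      (-1 : ℤˣ) ^ inversions (List.ofFn (fun i => α' (a i)) ++ c.sort (· ≤ ·)) := by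
    rw [hrowlist, inversions_ofFn, sign_eq_pow]
    congr 2
    apply Finset.filter_congr
    intro p _
    have key : ∀ x y : Fin m, ρ x < ρ y ↔ α' (grow x) < α' (grow y) := by
      intro x y
      rw [hα'mono.lt_iff_lt]
      exact Iff.rfl
    constructor
    · rintro ⟨h1, h2⟩; exact ⟨h1, (key _ _).mp h2⟩
    · rintro ⟨h1, h2⟩; exact ⟨h1, (key _ _).mpr h2⟩
  -- final assembly
  rw [← hdetN2, hdetN]
  have hc1 : ((Equiv.Perm.sign σc : ℤ) : R) =
      (-1 : R) ^ inversions (List.ofFn b ++ c.sort (· ≤ ·)) := by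
    rw [hcollist, hσc2]
    push_cast
    norm_num
  have hc2 : ((Equiv.Perm.sign ρ : ℤ) : R) =
      (-1 : R) ^ inversions (List.ofFn (fun i => α' (a i)) ++ c.sort (· ≤ ·)) := by
    rw [hsignρ]
    push_cast
    norm_num
  push_cast
  rw [hc1, hc2]
  have hαa : (fun i => ((A.orderIsoOfFin hA (a i) : V))) = fun i => α' (a i) := rfl
  rw [hαa, pow_add]
  ring
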